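/- For complex z with 0 < Re(z) ≤ μ and real y > 0, the modified Bessel function of the first kind satisfies |I_z(y)| ≤ I_{Re z}(y) · e^{π|Im z|/2}. -/

import Mathlib

open Complex Real MeasureTheory Set Filter
open Topology

/-- Bessel function of the first kind of complex order `ν` at positive real argument `x`. -/
noncomputable def besselJ (ν : ℂ) (x : ℝ) : ℂ :=
  ∑' k : ℕ, ((-1 : ℂ) ^ k / ((k.factorial : ℂ) * Complex.Gamma (ν + k + 1))) *
    ((x : ℂ) / 2) ^ (ν + 2 * (k : ℂ))

/-- Bessel function of the second kind of complex order `ν`. -/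
noncomputable def besselY (ν : ℂ) (x : ℝ) : ℂ :=
  (besselJ ν x * Complex.cos ((π : ℂ) * ν) - besselJ (-ν) x) / Complex.sin ((π : ℂ) * ν)

/-- Modified Bessel function of the first kind of complex order `ν`. -/
noncomputable def besselI (ν : ℂ) (x : ℝ) : ℂ :=
  ∑' k : ℕ, (1 / ((k.factorial : ℂ) * Complex.Gamma (ν + k + 1))) *
    ((x : ℂ) / 2) ^ (ν + 2 * (k : ℂ))

/-- Modified Bessel function of the second kind (Macdonald function). -/
noncomputable def besselK (ν : ℂ) (x : ℝ) : ℂ :=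
  ((π : ℂ) / 2) * (besselI (-ν) x - besselI ν x) / Complex.sin ((π : ℂ) * ν)

/-- Anger function `𝐉_ν(z) = (1/π) ∫₀^π cos (ν θ − z sin θ) dθ`. -/
noncomputable def angerJ (ν : ℂ) (z : ℝ) : ℂ :=
  (1 / (π : ℂ)) * ∫ θ in (0 : ℝ)..π, Complex.cos (ν * (θ : ℂ) - (z : ℂ) * Real.sin θ)

/-- The Weber type kernel away from `τ = 0`. -/
noncomputable def weberW₀ (α x τ : ℝ) : ℝ :=
  (besselJ ((α : ℂ) + τ * I) (Real.sqrt x) * besselY ((α : ℂ) - τ * I) (Real.sqrt x)).im /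
    Real.sinh (π * τ)

/-- The Weber type kernel `W_α(x,τ) = Im[J_{α+iτ}(√x) Y_{α−iτ}(√x)]/sinh(πτ)`,
defined at `τ = 0` by continuity. -/
noncomputable def weberW (α x τ : ℝ) : ℝ :=
  if τ = 0 then limUnder (nhdsWithin 0 {(0 : ℝ)}ᶜ) (weberW₀ α x)
  else weberW₀ α x τ

lemma sinh_le_mul_exp {u : ℝ} (hu : 0 < u) : Real.sinh u ≤ u * Real.exp u := by
  have h := Real.add_one_le_exp (-(2*u))
  have h2 : Real.exp (-(2*u)) = Real.exp (-u) * Real.exp (-u) := by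
    rw [← Real.exp_add]; ring_nf
  have h3 : Real.exp u * Real.exp (-u) = 1 := by rw [← Real.exp_add]; simp
  rw [Real.sinh_eq]
  nlinarith [Real.exp_pos u, Real.exp_pos (-u),
    mul_le_mul_of_nonneg_left (h.trans_eq h2) (Real.exp_pos u).le]

lemma prodB (t : ℝ) (n : ℕ) :
    ∏ j ∈ Finset.range n, (1 + t ^ 2 / ((j : ℝ) + 1) ^ 2) ≤ Real.exp (π * |t|) := by
  rcases eq_or_ne t 0 with rfl | ht
  · simp
  have hs : 0 < |t| := abs_pos.mpr ht
  have hts : t ^ 2 = |t| ^ 2 := (_root_.sq_abs t).symm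
  set s := |t| with hsdef
  rw [hts]
  set P : ℕ → ℝ := fun m => ∏ j ∈ Finset.range m, (1 + s ^ 2 / ((j:ℝ)+1) ^ 2) with hP
  have hfac : ∀ j : ℕ, (1:ℝ) ≤ 1 + s ^ 2 / ((j:ℝ)+1) ^ 2 := by
    intro j; have : (0:ℝ) ≤ s ^ 2 / ((j:ℝ)+1) ^ 2 := by positivity
    linarith
  have hmono : Monotone P := by
    apply monotone_nat_of_le_succ
    intro m
    rw [hP]
    simp only
    rw [Finset.prod_range_succ]
    have hpos : 0 < ∏ j ∈ Finset.range m, (1 + s ^ 2 / ((j:ℝ)+1) ^ 2) := by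
      apply Finset.prod_pos; intro j _; linarith [hfac j]
    nlinarith [hfac m]
  have h0 := Complex.tendsto_euler_sin_prod ((s:ℂ) * I)
  have key : ∀ m : ℕ, (π:ℂ) * ((s:ℂ)*I) * ∏ j ∈ Finset.range m,
      ((1:ℂ) - ((s:ℂ)*I)^2/((j:ℂ)+1)^2) = ((π * s * P m : ℝ) : ℂ) * I := by
    intro m
    have hfac2 : ∀ j ∈ Finset.range m, ((1:ℂ) - ((s:ℂ)*I)^2/((j:ℂ)+1)^2)
        = (((1 + s^2/((j:ℝ)+1)^2 : ℝ)) : ℂ) := by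
      intro j _
      rw [mul_pow, Complex.I_sq]
      push_cast
      ring
    rw [Finset.prod_congr rfl hfac2, ← Complex.ofReal_prod]
    push_cast [hP]
    ring
  have hlimpt : Complex.sin ((π:ℂ) * ((s:ℂ)*I)) = ((Real.sinh (π*s) : ℝ) : ℂ) * I := by
    have : (π:ℂ) * ((s:ℂ)*I) = ((π*s : ℝ):ℂ) * I := by push_cast; ring
    rw [this, Complex.sin_mul_I, Complex.ofReal_sinh]
  rw [hlimpt] at h0
  have h0' : Tendsto (fun m : ℕ => ((π * s * P m : ℝ) : ℂ) * I) atTop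
      (𝓝 (((Real.sinh (π*s) : ℝ) : ℂ) * I)) := by
    apply h0.congr
    intro m; exact key m
  have h1 : Tendsto (fun m : ℕ => π * s * P m) atTop (𝓝 (Real.sinh (π*s))) := by
    have h := (Complex.continuous_im.tendsto _).comp h0'
    have e1 : (fun m : ℕ => ((((π * s * P m : ℝ) : ℂ) * I).im)) = fun m => π * s * P m := by
      funext m; rw [Complex.mul_I_im, Complex.ofReal_re]
    have e2 : ((((Real.sinh (π*s) : ℝ) : ℂ)) * I).im = Real.sinh (π*s) := by
      rw [Complex.mul_I_im, Complex.ofReal_re]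
    rw [Function.comp_def] at h
    rw [← e1, ← e2]
    exact h
  have hπs : 0 < π * s := mul_pos Real.pi_pos hs
  have h2 : Tendsto P atTop (𝓝 (Real.sinh (π*s)/(π*s))) := by
    have := h1.div_const (π*s)
    simpa only [mul_div_cancel_left₀ _ hπs.ne'] using this
  have hle : P n ≤ Real.sinh (π*s)/(π*s) := hmono.ge_of_tendsto h2 n
  refine hle.trans ?_
  rw [div_le_iff₀ hπs]
  calc Real.sinh (π*s) ≤ (π*s) * Real.exp (π*s) := sinh_le_mul_exp hπs
    _ = Real.exp (π*s) * (π*s) := by ring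

lemma gammaLB (x t : ℝ) (hx : 1 ≤ x) :
    Real.Gamma x ≤ ‖Complex.Gamma ((x:ℂ) + t * I)‖ * Real.exp (π * |t| / 2) := by
  have hx0 : (0:ℝ) < x := lt_of_lt_of_le one_pos hx
  set C := Real.exp (π * |t| / 2) with hC
  have hCpos : 0 < C := Real.exp_pos _
  have h1 : Tendsto (fun n => ‖Complex.GammaSeq (x:ℂ) n‖) atTop
      (𝓝 (‖Complex.Gamma (x:ℂ)‖)) :=
    (continuous_norm.tendsto _).comp (Complex.GammaSeq_tendsto_Gamma _)
  have h2 : Tendsto (fun n => ‖Complex.GammaSeq ((x:ℂ) + t*I) n‖ * C) atTop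
      (𝓝 (‖Complex.Gamma ((x:ℂ) + t*I)‖ * C)) :=
    ((continuous_norm.tendsto _).comp (Complex.GammaSeq_tendsto_Gamma _)).mul_const C
  have key : ∀ n : ℕ, 1 ≤ n → ‖Complex.GammaSeq (x:ℂ) n‖ ≤
      ‖Complex.GammaSeq ((x:ℂ) + t*I) n‖ * C := by
    intro n hn
    have hnpos : (0:ℝ) < (n:ℝ) := by exact_mod_cast Nat.cast_pos.mpr hn
    have hGs : ∀ (s:ℂ), ‖Complex.GammaSeq s n‖ =
        (n:ℝ)^s.re * (n.factorial:ℝ) / ∏ j ∈ Finset.range (n+1), ‖s + (j:ℂ)‖ := by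
      intro s
      rw [Complex.GammaSeq, norm_div, norm_mul, norm_prod,
        show (n:ℂ) = ((n:ℝ):ℂ) from by norm_cast,
        Complex.norm_cpow_eq_rpow_re_of_pos hnpos, Complex.norm_natCast]
    rw [hGs, hGs]
    have hre1 : ((x:ℂ)).re = x := Complex.ofReal_re x
    have hre2 : ((x:ℂ) + t*I).re = x := by simp
    rw [hre1, hre2]
    have e1 : ∏ j ∈ Finset.range (n+1), ‖(x:ℂ) + (j:ℂ)‖ =
        ∏ j ∈ Finset.range (n+1), (x + (j:ℝ)) := by
      refine Finset.prod_congr rfl fun j _ => ?_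
      rw [show (x:ℂ) + (j:ℂ) = ((x + (j:ℝ) : ℝ):ℂ) from by push_cast; ring,
        Complex.norm_real, Real.norm_eq_abs, abs_of_pos (by positivity)]
    rw [e1]
    set A := ∏ j ∈ Finset.range (n+1), (x + (j:ℝ)) with hA
    set B := ∏ j ∈ Finset.range (n+1), ‖(x:ℂ) + t*I + (j:ℂ)‖ with hB
    have hApos : 0 < A := Finset.prod_pos (fun j _ => by positivity)
    have e2 : ∀ j : ℕ, (‖(x:ℂ) + t*I + (j:ℂ)‖)^2 = ((x + (j:ℝ))^2 + t^2) := by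
      intro j
      rw [show (x:ℂ) + t*I + (j:ℂ) = ((x + (j:ℝ) : ℝ):ℂ) + (t:ℝ)*I from by push_cast; ring,
        Complex.sq_norm, Complex.normSq_add_mul_I]
    have hBpos : 0 < B := by
      apply Finset.prod_pos
      intro j _
      nlinarith [norm_nonneg ((x:ℂ)+t*I+(j:ℂ)), e2 j, sq_nonneg t,
        (show (0:ℝ) < (x+(j:ℝ))^2 by positivity)]
    have hC2 : C^2 = Real.exp (π * |t|) := by
      rw [hC, ← Real.exp_nat_mul]
      congr 1
      push_cast
      ring
    have hsq : B^2 ≤ (A * C)^2 := by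
      rw [hB, hA, ← Finset.prod_pow, mul_pow, ← Finset.prod_pow, hC2]
      have e3 : ∀ j ∈ Finset.range (n+1), ‖(x:ℂ)+t*I+(j:ℂ)‖^2
          = (x+(j:ℝ))^2 * (1 + t^2/(x+(j:ℝ))^2) := by
        intro j _
        rw [e2 j]
        have : (0:ℝ) < (x+(j:ℝ))^2 := by positivity
        field_simp
      rw [Finset.prod_congr rfl e3, Finset.prod_mul_distrib]
      refine mul_le_mul_of_nonneg_left ?_ (Finset.prod_nonneg fun j _ => by positivity)
      calc ∏ j ∈ Finset.range (n+1), (1 + t^2/(x+(j:ℝ))^2)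
          ≤ ∏ j ∈ Finset.range (n+1), (1 + t^2/((j:ℝ)+1)^2) := by
            refine Finset.prod_le_prod (fun j _ => by positivity) (fun j _ => ?_)
            have h1 : ((j:ℝ)+1) ≤ x + j := by linarith
            have h0 : (0:ℝ) < (j:ℝ)+1 := by positivity
            gcongr
        _ ≤ Real.exp (π * |t|) := prodB t (n+1)
    have hBle : B ≤ A * C := by
      have h := Real.sqrt_le_sqrt hsq
      rwa [Real.sqrt_sq hBpos.le, Real.sqrt_sq (by positivity)] at h
    rw [div_mul_eq_mul_div, div_le_div_iff₀ hApos hBpos]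
    have hnn : (0:ℝ) ≤ (n:ℝ)^x * (n.factorial:ℝ) := by positivity
    nlinarith [mul_le_mul_of_nonneg_left hBle hnn]
  have hfin := le_of_tendsto_of_tendsto h1 h2 (eventually_atTop.mpr ⟨1, key⟩)
  rwa [Complex.Gamma_ofReal, Complex.norm_real, Real.norm_eq_abs,
    abs_of_pos (Real.Gamma_pos_of_pos hx0)] at hfin

lemma gammaFac (x : ℝ) (hx : 0 < x) :
    ∀ k : ℕ, (k.factorial : ℝ) * Real.Gamma (x + 1) ≤ Real.Gamma (x + k + 1) := by
  intro k
  induction k with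
  | zero => simp
  | succ k ih =>
    have hpos : (0:ℝ) < x + k + 1 := by positivity
    have hG : Real.Gamma (x + (k+1) + 1) = (x + k + 1) * Real.Gamma (x + k + 1) := by
      rw [show x + ((k:ℝ)+1) + 1 = (x + k + 1) + 1 by ring, Real.Gamma_add_one hpos.ne']
    have hGpos : 0 < Real.Gamma (x + k + 1) := Real.Gamma_pos_of_pos hpos
    have hfac : ((k+1).factorial : ℝ) = ((k:ℝ)+1) * k.factorial := by
      rw [Nat.factorial_succ]; push_cast; ring
    push_cast [hfac] at *
    nlinarith [(show (0:ℝ) < k.factorial by exact_mod_cast k.factorial_pos),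
      Real.Gamma_pos_of_pos (show (0:ℝ) < x + 1 by linarith)]

set_option maxHeartbeats 1000000 in
theorem stmt8 (μ : ℝ) (z : ℂ) (hz1 : 0 < z.re) (hz2 : z.re ≤ μ) (y : ℝ) (hy : 0 < y) :
    ‖besselI z y‖ ≤
      ‖besselI ((z.re : ℂ)) y‖ * Real.exp (π * |z.im| / 2) := by
  set x := z.re with hxdef
  set t := z.im with htdef
  set C := Real.exp (π * |t| / 2) with hC
  have hCpos : 0 < C := Real.exp_pos _
  have hy2 : (0:ℝ) < y/2 := by linarith
  set g : ℕ → ℝ := fun k => (y/2)^(x + 2*k) / (k.factorial * Real.Gamma (x + k + 1)) with hg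
  have hGpos : ∀ k : ℕ, 0 < Real.Gamma (x + k + 1) :=
    fun k => Real.Gamma_pos_of_pos (by positivity)
  have hgpos : ∀ k, 0 < g k := by
    intro k
    have := hGpos k
    have : (0:ℝ) < (k.factorial:ℝ) := by exact_mod_cast k.factorial_pos
    rw [hg]
    positivity
  -- summability of g
  have hsumg : Summable g := by
    refine Summable.of_nonneg_of_le (fun k => (hgpos k).le) (fun k => ?_)
      ((Real.summable_pow_div_factorial ((y/2)^2)).mul_left ((y/2)^x / Real.Gamma (x+1)))
    ·
      have hsplit : (y/2)^(x + 2*(k:ℕ)) = (y/2)^x * ((y/2)^2)^k := by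
        rw [Real.rpow_add hy2, show ((2:ℝ)*k) = ((2*k : ℕ):ℝ) by push_cast; ring,
          Real.rpow_natCast, pow_mul]
      have hfk : (1:ℝ) ≤ (k.factorial:ℝ) := by exact_mod_cast k.factorial_pos
      have hden : Real.Gamma (x+1) * k.factorial ≤ k.factorial * Real.Gamma (x + k + 1) := by
        calc Real.Gamma (x+1) * k.factorial = (k.factorial:ℝ) * Real.Gamma (x+1) := by ring
          _ ≤ Real.Gamma (x + k + 1) := gammaFac x hz1 k
          _ ≤ k.factorial * Real.Gamma (x + k + 1) := by nlinarith [hGpos k]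
      have h2 : (0:ℝ) < Real.Gamma (x+1) := Real.Gamma_pos_of_pos (by linarith)
      have h3 := hGpos k
      rw [hg]
      simp only
      rw [hsplit, div_mul_div_comm ((y/2)^x) (Real.Gamma (x+1)) ((((y/2)^2)^k))
        ((k.factorial:ℝ))]
      gcongr
  -- termwise bound
  set f : ℕ → ℂ := fun k => (1 / ((k.factorial : ℂ) * Complex.Gamma (z + k + 1))) *
    ((y:ℂ) / 2) ^ (z + 2 * (k:ℂ)) with hf
  have hterm : ∀ k : ℕ, ‖f k‖ ≤ g k * C := by
    intro k
    have hzk : z + k + 1 = ((x + k + 1 : ℝ):ℂ) + t * I := by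
      rw [← Complex.re_add_im z]
      push_cast
      ring
    have hGam := gammaLB (x + k + 1) t (by push_cast; linarith [Nat.cast_nonneg (α := ℝ) k])
    have haΓ : ‖Complex.Gamma (z + k + 1)‖ =
        ‖Complex.Gamma (((x + k + 1 : ℝ):ℂ) + t * I)‖ := by rw [hzk]
    set aΓ := ‖Complex.Gamma (((x + k + 1 : ℝ):ℂ) + t * I)‖ with haΓdef
    have haΓpos : 0 < aΓ := by
      apply norm_pos_iff.mpr
      apply Complex.Gamma_ne_zero_of_re_pos
      simp
      positivity
    have hP : ‖((y:ℂ)/2) ^ (z + 2*(k:ℂ))‖ = (y/2)^(x + 2*k) := by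
      rw [show (y:ℂ)/2 = ((y/2 : ℝ):ℂ) by push_cast; ring,
        Complex.norm_cpow_eq_rpow_re_of_pos hy2]
      congr 1
      simp [hxdef]
    rw [hf]
    simp only
    rw [norm_mul, norm_div, norm_one, norm_mul, Complex.norm_natCast, haΓ, hP]
    have hfk : (0:ℝ) < (k.factorial:ℝ) := by exact_mod_cast k.factorial_pos
    have hGk := hGpos k
    rw [hg]
    simp only
    rw [div_mul_eq_mul_div, one_mul, div_mul_eq_mul_div,
      div_le_div_iff₀ (by positivity) (by positivity)]
    nlinarith [mul_le_mul_of_nonneg_left hGam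
      (show (0:ℝ) ≤ (y/2)^(x+2*k) * k.factorial by positivity), hGpos k, hCpos, haΓpos]
  have hsumabs : Summable (fun k => ‖f k‖) :=
    Summable.of_nonneg_of_le (fun k => norm_nonneg _) hterm (hsumg.mul_right C)
  -- besselI at real order
  have hbx : besselI ((x : ℝ):ℂ) y = ((∑' k, g k : ℝ) : ℂ) := by
    rw [besselI, Complex.ofReal_tsum]
    congr 1
    funext k
    have hGam : Complex.Gamma ((x:ℂ) + k + 1) = ((Real.Gamma (x + k + 1) : ℝ):ℂ) := by
      rw [show (x:ℂ) + k + 1 = ((x + k + 1 : ℝ):ℂ) by push_cast; ring, Complex.Gamma_ofReal]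
    have hPow : ((y:ℂ)/2) ^ ((x:ℂ) + 2*(k:ℂ)) = (((y/2)^(x + 2*k) : ℝ):ℂ) := by
      rw [show (y:ℂ)/2 = ((y/2 : ℝ):ℂ) by push_cast; ring,
        show (x:ℂ) + 2*(k:ℂ) = ((x + 2*k : ℝ):ℂ) by push_cast; ring,
        ← Complex.ofReal_cpow hy2.le]
    rw [hGam, hPow, hg]
    push_cast
    ring
  have habsx : ‖besselI ((x : ℝ):ℂ) y‖ = ∑' k, g k := by
    rw [hbx, Complex.norm_real, Real.norm_eq_abs, _root_.abs_of_nonneg (tsum_nonneg (fun k => (hgpos k).le))]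
  calc ‖besselI z y‖ = ‖∑' k, f k‖ := by rw [besselI]
    _ ≤ ∑' k, ‖f k‖ := by
        have h := norm_tsum_le_tsum_norm (f := f) hsumabs
        exact h
    _ ≤ ∑' k, g k * C := hsumabs.tsum_le_tsum hterm (hsumg.mul_right C)
    _ = (∑' k, g k) * C := tsum_mul_right
    _ = ‖besselI ((x : ℝ):ℂ) y‖ * C := by rw [habsx]
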